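/- Let 𝒟 be a complex inner product space and T : 𝒟 → 𝒟 a symmetric linear operator, i.e. ⟪Tξ, η⟫ = ⟪ξ, Tη⟫ for all ξ, η ∈ 𝒟. For p ∈ ℂ[X] let p(T) : 𝒟 → 𝒟 denote the polynomial functional calculus (evaluation of p at T). Then for every n ∈ ℕ and every polynomial p ∈ ℂ[X] of degree at most n there is a constant C > 0 such that ‖ξ‖² + ‖p(T)ξ‖² ≤ C·(‖ξ‖² + ‖Tⁿξ‖²) for all ξ ∈ 𝒟. Equivalently, the graph topology of the associated representation of the polynomial *-algebra ℂ[x] (with x = x*) is generated by the graph norms of the monomials xⁿ, n ∈ ℕ. -/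

import Mathlib

open Polynomial

/-- Auxiliary: a nonnegative log-convex (in the discrete sense) sequence on `[0, n]`
attains its maximum at the endpoints. -/
lemma graph_norm_suffix_max (n : ℕ) (a : ℕ → ℝ) (ha : ∀ k, 0 ≤ a k)
    (hconv : ∀ k, 0 < k → k < n → a k ^ 2 ≤ a (k - 1) * a (k + 1)) :
    ∀ j i, n - j ≤ i → i ≤ n → a i ≤ max (a (n - j)) (a n) := by
  intro j
  induction j with
  | zero =>
    intro i h1 h2
    have : i = n := by omega
    simp [this]
  | succ j ih =>
    rcases le_or_gt n j with hnj | hjn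
    · have e : n - (j + 1) = n - j := by omega
      rw [e]; exact ih
    · set m := n - j with hm
      have hm1 : 1 ≤ m := by omega
      have e : n - (j + 1) = m - 1 := by omega
      rw [e]
      intro i h1 h2
      rcases eq_or_lt_of_le h1 with h | h
      · rw [← h]; exact le_max_left _ _
      · have hi : m ≤ i := by omega
        have hih := ih i hi h2
        have hkey : a m ≤ max (a (m - 1)) (a n) := by
          rcases eq_or_lt_of_le (show m ≤ n by omega) with hmn | hmn
          · rw [hmn]; exact le_max_right _ _
          · have h2conv := hconv m (by omega) hmn
            have hnext : a (m + 1) ≤ max (a m) (a n) :=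
              ih (m + 1) (by omega) (by omega)
            rcases le_or_gt (a m) (a n) with h' | h'
            · exact le_trans h' (le_max_right _ _)
            · have hle : a (m + 1) ≤ a m := by
                rw [max_eq_left h'.le] at hnext; exact hnext
              have hsq : a m ^ 2 ≤ a (m - 1) * a m := by
                nlinarith [ha (m - 1), ha (m + 1)]
              rcases eq_or_lt_of_le (ha m) with h0 | h0
              · rw [← h0]; exact le_max_of_le_left (ha _)
              · have : a m ≤ a (m - 1) := by nlinarith
                exact le_trans this (le_max_left _ _)
        exact hih.trans (max_le hkey (le_max_right _ _))

/-- Let `T` be a symmetric operator on a complex inner product space `𝒟`.  For every `n` and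
every polynomial `p` of degree at most `n` there is a constant `C > 0` such that
`‖ξ‖² + ‖p(T) ξ‖² ≤ C * (‖ξ‖² + ‖Tⁿ ξ‖²)` for all `ξ`; that is, the graph topology of the
associated representation of `ℂ[x]` is generated by the graph norms of the monomials `xⁿ`. -/
theorem graph_norm_poly_le (𝒟 : Type*) [NormedAddCommGroup 𝒟] [InnerProductSpace ℂ 𝒟]
    (T : Module.End ℂ 𝒟) (hT : ∀ ξ η : 𝒟, (inner ℂ (T ξ) η : ℂ) = inner ℂ ξ (T η))
    (n : ℕ) (p : Polynomial ℂ) (hp : p.natDegree ≤ n) :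
    ∃ C > (0 : ℝ), ∀ ξ : 𝒟,
      ‖ξ‖ ^ 2 + ‖(Polynomial.aeval T p) ξ‖ ^ 2 ≤ C * (‖ξ‖ ^ 2 + ‖(T ^ n) ξ‖ ^ 2) := by
  set S : ℝ := ∑ i ∈ Finset.range (n + 1), ‖p.coeff i‖ with hS
  have hS0 : 0 ≤ S := Finset.sum_nonneg fun _ _ => norm_nonneg _
  refine ⟨1 + S ^ 2, by positivity, ?_⟩
  intro ξ
  set a : ℕ → ℝ := fun k => ‖(T ^ k) ξ‖ with haa
  have ha : ∀ k, 0 ≤ a k := fun k => norm_nonneg _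
  have hconv : ∀ k, 0 < k → k < n → a k ^ 2 ≤ a (k - 1) * a (k + 1) := by
    intro k hk _
    have hk' : k - 1 + 1 = k := by omega
    set η := (T ^ (k - 1)) ξ with hη
    have h1 : (T ^ k) ξ = T η := by
      rw [← hk', pow_succ']; rfl
    have h2 : (T ^ (k + 1)) ξ = T (T η) := by
      have : k - 1 + 1 + 1 = k + 1 := by omega
      rw [← this, pow_succ', pow_succ']; rfl
    have hre : ‖T η‖ ^ 2 = RCLike.re (inner ℂ (T η) (T η) : ℂ) := by
      rw [← inner_self_eq_norm_sq (𝕜 := ℂ)]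
    have hsym : (inner ℂ (T η) (T η) : ℂ) = inner ℂ η (T (T η)) := hT η (T η)
    calc a k ^ 2 = RCLike.re (inner ℂ (T η) (T η) : ℂ) := by rw [haa]; simp only [h1]; exact hre
      _ = RCLike.re (inner ℂ η (T (T η)) : ℂ) := by rw [hsym]
      _ ≤ ‖(inner ℂ η (T (T η)) : ℂ)‖ := RCLike.re_le_norm _
      _ ≤ ‖η‖ * ‖T (T η)‖ := norm_inner_le_norm _ _
      _ = a (k - 1) * a (k + 1) := by rw [haa]; simp only [h2, hη]
  have hmax : ∀ k ≤ n, a k ≤ max (a 0) (a n) := by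
    intro k hk
    have := graph_norm_suffix_max n a ha hconv n k (by omega) hk
    simpa using this
  set M : ℝ := max (a 0) (a n) with hM
  have hM0 : 0 ≤ M := le_trans (ha 0) (le_max_left _ _)
  have hp' : (Polynomial.aeval T p) ξ
      = ∑ i ∈ Finset.range (n + 1), p.coeff i • ((T ^ i) ξ) := by
    rw [Polynomial.aeval_eq_sum_range' (Nat.lt_succ_of_le hp)]
    simp [LinearMap.sum_apply]
  have hnorm : ‖(Polynomial.aeval T p) ξ‖ ≤ S * M := by
    rw [hp', hS, Finset.sum_mul]
    refine le_trans (norm_sum_le _ _) (Finset.sum_le_sum fun i hi => ?_)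
    rw [norm_smul]
    exact mul_le_mul_of_nonneg_left (hmax i (by
      simpa using Nat.lt_succ_iff.mp (Finset.mem_range.mp hi))) (norm_nonneg _)
  have hM2 : M ^ 2 ≤ a 0 ^ 2 + a n ^ 2 := by
    rcases max_cases (a 0) (a n) with ⟨h1, _⟩ | ⟨h1, _⟩ <;> rw [hM, h1] <;>
      nlinarith [ha 0, ha n]
  have ha0 : a 0 = ‖ξ‖ := by simp [haa]
  have hP0 : 0 ≤ ‖(Polynomial.aeval T p) ξ‖ := norm_nonneg _
  have hPsq : ‖(Polynomial.aeval T p) ξ‖ ^ 2 ≤ S ^ 2 * M ^ 2 := by nlinarith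
  have hmul : S ^ 2 * M ^ 2 ≤ S ^ 2 * (a 0 ^ 2 + a n ^ 2) :=
    mul_le_mul_of_nonneg_left hM2 (sq_nonneg S)
  show a 0 ^ 2 + ‖(Polynomial.aeval T p) ξ‖ ^ 2 ≤ (1 + S ^ 2) * (a 0 ^ 2 + a n ^ 2)
  nlinarith [sq_nonneg (a n), sq_nonneg (a 0), hPsq, hmul, sq_nonneg S]
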